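/- arXiv:2111.15061 — 3 statements merged into one kernel-verified Lean document; each statement's English description precedes it below -/
import Mathlib

section
/- For any nonnegative integrable function f on [-δ,δ] (δ>0), the cube of the integral of f is bounded by a universal constant times the squared L² norm of f times the weighted integral ∫ |r| f(r) dr; that is, (∫_{-δ}^{δ} f(r) dr)³ ≤ C · (∫_{-δ}^{δ} f(r)² dr) · (∫_{-δ}^{δ} |r| f(r) dr) for some absolute constant C. -/
open MeasureTheory

/-- For any nonnegative integrable `f` on `[-δ,δ]`,
`(∫ f)³ ≤ C · (∫ f²) · (∫ |r| f(r) dr)` for an absolute constant `C`. -/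
theorem stmt_0 :
    ∃ C > (0:ℝ), ∀ (δ : ℝ), 0 < δ → ∀ f : ℝ → ℝ,
      (∀ x ∈ Set.Icc (-δ) δ, 0 ≤ f x) →
      IntegrableOn f (Set.Icc (-δ) δ) volume →
      IntegrableOn (fun x => (f x) ^ 2) (Set.Icc (-δ) δ) volume →
      (∫ x in Set.Icc (-δ) δ, f x) ^ 3 ≤
        C * (∫ x in Set.Icc (-δ) δ, (f x) ^ 2) *
          (∫ x in Set.Icc (-δ) δ, |x| * f x) := by
  refine ⟨27, by norm_num, ?_⟩
  intro δ hδ f hpos hf hf2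
  set S : Set ℝ := Set.Icc (-δ) δ with hSdef
  have hS : MeasurableSet S := measurableSet_Icc
  set I : ℝ := ∫ x in S, f x with hIdef
  set A2 : ℝ := ∫ x in S, (f x) ^ 2 with hA2def
  set B : ℝ := ∫ x in S, |x| * f x with hBdef
  have hA2nonneg : 0 ≤ A2 := setIntegral_nonneg hS fun x _ => sq_nonneg _
  have hBnonneg : 0 ≤ B := setIntegral_nonneg hS fun x hx =>
    mul_nonneg (abs_nonneg x) (hpos x hx)
  -- integrability of |x| * f x on S
  have hBint : IntegrableOn (fun x => |x| * f x) S volume := by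
    refine Integrable.mono (hf.const_mul δ) ?_ ?_
    · exact (continuous_abs.aestronglyMeasurable).mul hf.aestronglyMeasurable
    · refine (ae_restrict_iff' hS).2 (Filter.Eventually.of_forall fun x hx => ?_)
      have hxd : |x| ≤ δ := abs_le.2 ⟨hx.1, hx.2⟩
      rw [Real.norm_eq_abs, Real.norm_eq_abs, abs_mul, abs_mul, abs_abs,
        abs_of_pos hδ]
      exact mul_le_mul_of_nonneg_right hxd (abs_nonneg _)
  -- key inequality: for all c ε > 0, I ≤ A2/(2c) + c*ε + B/ε
  have key : ∀ c ε : ℝ, 0 < c → 0 < ε →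
      I ≤ A2 / (2 * c) + c * ε + B / ε := by
    intro c ε hc hε
    set T : Set ℝ := S ∩ Set.Icc (-ε) ε with hTdef
    set U : Set ℝ := S \ Set.Icc (-ε) ε with hUdef
    have hTm : MeasurableSet T := hS.inter measurableSet_Icc
    have hUm : MeasurableSet U := hS.diff measurableSet_Icc
    have hTS : T ⊆ S := Set.inter_subset_left
    have hUS : U ⊆ S := Set.diff_subset
    have hTU : Disjoint T U :=
      Set.disjoint_sdiff_right.mono_left Set.inter_subset_right
    have hTUS : T ∪ U = S := Set.inter_union_diff S _
    have hsplit : I = (∫ x in T, f x) + ∫ x in U, f x := by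
      rw [hIdef, ← hTUS]
      exact setIntegral_union hTU hUm (hf.mono_set hTS) (hf.mono_set hUS)
    -- measure of T
    have hμT : (volume T).toReal ≤ 2 * ε := by
      have h1 : volume T ≤ volume (Set.Icc (-ε) ε) :=
        measure_mono Set.inter_subset_right
      have h2 : volume (Set.Icc (-ε) ε) = ENNReal.ofReal (2 * ε) := by
        rw [Real.volume_Icc]; ring_nf
      refine ENNReal.toReal_le_of_le_ofReal (by positivity) ?_
      rw [← h2]; exact h1
    -- bound on T
    have hT1 : (∫ x in T, f x) ≤ A2 / (2 * c) + c * ε := by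
      have hμTfin : volume T ≠ ⊤ := by
        refine ne_of_lt (lt_of_le_of_lt (measure_mono Set.inter_subset_right) ?_)
        rw [Real.volume_Icc]; exact ENNReal.ofReal_lt_top
      have hint1 : IntegrableOn (fun x => (f x) ^ 2 / (2 * c)) T volume :=
        (hf2.mono_set hTS).div_const _
      have hint2 : IntegrableOn (fun _ : ℝ => c / 2) T volume :=
        integrableOn_const hμTfin
      have step1 : (∫ x in T, f x) ≤ ∫ x in T, ((f x) ^ 2 / (2 * c) + c / 2) := by
        refine setIntegral_mono_on (hf.mono_set hTS) (hint1.add hint2) hTm ?_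
        intro x _
        have := sq_nonneg (f x - c)
        rw [div_add' _ _ _ (by positivity)]
        rw [le_div_iff₀ (by positivity)]
        nlinarith
      have step2 : (∫ x in T, ((f x) ^ 2 / (2 * c) + c / 2)) =
          (∫ x in T, (f x) ^ 2) / (2 * c) + (c / 2) * (volume T).toReal := by
        rw [integral_add hint1 hint2, integral_div, setIntegral_const, smul_eq_mul, measureReal_def]
        ring
      have step3 : (∫ x in T, (f x) ^ 2) ≤ A2 := by
        refine setIntegral_mono_set hf2 ?_ hTS.eventuallyLE
        exact Filter.Eventually.of_forall fun x => sq_nonneg _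
      calc (∫ x in T, f x) ≤ (∫ x in T, (f x) ^ 2) / (2 * c) + (c / 2) * (volume T).toReal := by
            rw [← step2]; exact step1
        _ ≤ A2 / (2 * c) + (c / 2) * (2 * ε) := by
            gcongr
        _ = A2 / (2 * c) + c * ε := by ring
    -- bound on U
    have hU1 : (∫ x in U, f x) ≤ B / ε := by
      have hint3 : IntegrableOn (fun x => (|x| * f x) / ε) U volume :=
        (hBint.mono_set hUS).div_const _
      have step1 : (∫ x in U, f x) ≤ ∫ x in U, (|x| * f x) / ε := by
        refine setIntegral_mono_on (hf.mono_set hUS) hint3 hUm ?_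
        intro x hx
        have hxS : x ∈ S := hx.1
        have hxnot : x ∉ Set.Icc (-ε) ε := hx.2
        have hxabs : ε ≤ |x| := by
          rcases lt_or_ge x (-ε) with h | h
          · rw [abs_of_neg (by linarith)]; linarith
          · have : ε < x := by
              by_contra hcon
              exact hxnot ⟨h, not_lt.1 hcon⟩
            rw [abs_of_pos (by linarith)]; linarith
        have hfx : 0 ≤ f x := hpos x hxS
        rw [le_div_iff₀ hε]
        calc f x * ε ≤ f x * |x| := by
              exact mul_le_mul_of_nonneg_left hxabs hfx
          _ = |x| * f x := mul_comm _ _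
      have step2 : (∫ x in U, (|x| * f x) / ε) = (∫ x in U, |x| * f x) / ε :=
        integral_div _ _
      have step3 : (∫ x in U, |x| * f x) ≤ B := by
        refine setIntegral_mono_set hBint ?_ hUS.eventuallyLE
        refine (ae_restrict_iff' hS).2 (Filter.Eventually.of_forall fun x hx => ?_)
        exact mul_nonneg (abs_nonneg x) (hpos x hx)
      calc (∫ x in U, f x) ≤ (∫ x in U, |x| * f x) / ε := by rw [← step2]; exact step1
        _ ≤ B / ε := by gcongr
    linarith [hsplit, hT1, hU1]
  -- main case analysis
  rcases le_or_gt I 0 with hI | hI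
  · calc I ^ 3 ≤ 0 := Odd.pow_nonpos ⟨1, by norm_num⟩ hI
      _ ≤ 27 * A2 * B := by positivity
  -- I > 0: show A2 > 0 and B > 0
  have hfae : ∀ᵐ x ∂(volume.restrict S), 0 ≤ f x :=
    (ae_restrict_iff' hS).2 (Filter.Eventually.of_forall hpos)
  have hA2pos : 0 < A2 := by
    rcases lt_or_eq_of_le hA2nonneg with h | h
    · exact h
    · exfalso
      have h0 : (fun x => (f x) ^ 2) =ᵐ[volume.restrict S] 0 := by
        refine (integral_eq_zero_iff_of_nonneg_ae ?_ hf2).1 h.symm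
        exact Filter.Eventually.of_forall fun x => sq_nonneg _
      have hf0 : f =ᵐ[volume.restrict S] 0 := by
        filter_upwards [h0] with x hx
        exact pow_eq_zero_iff (by norm_num) |>.1 hx
      have : I = 0 := by
        rw [hIdef]; rw [integral_congr_ae hf0]; simp
      linarith
  have hBpos : 0 < B := by
    rcases lt_or_eq_of_le hBnonneg with h | h
    · exact h
    · exfalso
      have h0 : (fun x => |x| * f x) =ᵐ[volume.restrict S] 0 := by
        refine (integral_eq_zero_iff_of_nonneg_ae ?_ hBint).1 h.symm
        refine (ae_restrict_iff' hS).2 (Filter.Eventually.of_forall fun x hx => ?_)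
        exact mul_nonneg (abs_nonneg x) (hpos x hx)
      have hne : ∀ᵐ x ∂(volume.restrict S), x ≠ 0 := by
        refine ae_restrict_of_ae ?_
        have : volume ({0} : Set ℝ) = 0 := Real.volume_singleton
        rw [Filter.eventually_iff, mem_ae_iff]
        convert this using 2
        ext x; simp
      have hf0 : f =ᵐ[volume.restrict S] 0 := by
        filter_upwards [h0, hne] with x hx hxne
        have : |x| ≠ 0 := abs_ne_zero.2 hxne
        have := mul_eq_zero.1 hx
        tauto
      have : I = 0 := by
        rw [hIdef]; rw [integral_congr_ae hf0]; simp
      linarith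
  -- apply key with optimal parameters
  have hkey := key (3 * A2 / (2 * I)) (3 * B / I) (by positivity) (by positivity)
  have h1 : A2 / (2 * (3 * A2 / (2 * I))) = I / 3 := by
    field_simp
  have h2 : B / (3 * B / I) = I / 3 := by
    field_simp
  have h3 : (3 * A2 / (2 * I)) * (3 * B / I) = 9 * A2 * B / (2 * I ^ 2) := by
    field_simp; ring
  rw [h1, h2, h3] at hkey
  have hstep : I / 3 ≤ 9 * A2 * B / (2 * I ^ 2) := by linarith
  rw [div_le_div_iff₀ (by norm_num) (by positivity)] at hstep
  nlinarith [hstep, sq_nonneg I, mul_pos hA2pos hBpos]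
end

section
/- For nonnegative integrable f on [0,δ], one has ‖f‖_{L¹(0,δ)}⁴ ≤ C ‖f‖_{L²(0,δ)}² ‖f‖_{L¹(0,δ)} ∫₀^δ r f(r) dr for an absolute constant C. (This follows by symmetrizing the fourfold product integral over the region {x₁+x₂ ≤ y₁+y₂} and applying Cauchy–Schwarz.) -/
open MeasureTheory

/-- Elementary Cauchy–Schwarz: `(∫ f)² ≤ (b-a) ∫ f²` on `[a,b]`. -/
lemma cs_aux {a b : ℝ} (hab : a < b) {f : ℝ → ℝ}
    (hf : IntegrableOn f (Set.Icc a b) volume)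
    (hf2 : IntegrableOn (fun x => f x ^ 2) (Set.Icc a b) volume) :
    (∫ x in Set.Icc a b, f x) ^ 2 ≤ (b - a) * ∫ x in Set.Icc a b, f x ^ 2 := by
  set I := ∫ x in Set.Icc a b, f x with hI
  set m := b - a with hmdef
  have hm : 0 < m := sub_pos.2 hab
  have hvol : (volume (Set.Icc a b)).toReal = m := by
    rw [Real.volume_Icc, ENNReal.toReal_ofReal hm.le]
  have hμ : volume (Set.Icc a b) < ⊤ := by
    rw [Real.volume_Icc]; exact ENNReal.ofReal_lt_top
  have key : 0 ≤ ∫ x in Set.Icc a b, (m * f x - I) ^ 2 :=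
    setIntegral_nonneg measurableSet_Icc fun x _ => sq_nonneg _
  have expand : ∫ x in Set.Icc a b, (m * f x - I) ^ 2
      = m ^ 2 * (∫ x in Set.Icc a b, f x ^ 2) - (2 * m * I) * I + I ^ 2 * m := by
    have h1 : ∀ x : ℝ, (m * f x - I) ^ 2
        = m ^ 2 * f x ^ 2 - (2 * m * I) * f x + I ^ 2 := fun x => by ring
    simp_rw [h1]
    have hi1 : IntegrableOn (fun x => m ^ 2 * f x ^ 2) (Set.Icc a b) volume :=
      hf2.const_mul _
    have hi2 : IntegrableOn (fun x => 2 * m * I * f x) (Set.Icc a b) volume :=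
      hf.const_mul _
    have hi3 : IntegrableOn (fun x => m ^ 2 * f x ^ 2 - 2 * m * I * f x)
        (Set.Icc a b) volume := hi1.sub hi2
    have hi4 : IntegrableOn (fun _ : ℝ => I ^ 2) (Set.Icc a b) volume :=
      integrableOn_const hμ.ne
    rw [integral_add hi3 hi4, integral_sub hi1 hi2,
      MeasureTheory.integral_const_mul, MeasureTheory.integral_const_mul, setIntegral_const, measureReal_def, hvol, smul_eq_mul]
    ring
  rw [expand] at key
  nlinarith [sq_nonneg I, key]

/-- For nonnegative integrable `f` on `[0,δ]`:
`‖f‖_{L¹}⁴ ≤ C ‖f‖_{L²}² ‖f‖_{L¹} ∫₀^δ r f(r) dr` for an absolute constant `C`. -/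
theorem stmt_1 :
    ∃ C > (0:ℝ), ∀ (δ : ℝ), 0 < δ → ∀ f : ℝ → ℝ,
      (∀ x ∈ Set.Icc (0:ℝ) δ, 0 ≤ f x) →
      IntegrableOn f (Set.Icc (0:ℝ) δ) volume →
      IntegrableOn (fun x => (f x) ^ 2) (Set.Icc (0:ℝ) δ) volume →
      (∫ x in Set.Icc (0:ℝ) δ, f x) ^ 4 ≤
        C * (∫ x in Set.Icc (0:ℝ) δ, (f x) ^ 2) *
          (∫ x in Set.Icc (0:ℝ) δ, f x) *
          (∫ x in Set.Icc (0:ℝ) δ, x * f x) := by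
  refine ⟨8, by norm_num, fun δ hδ f hpos hint hint2 => ?_⟩
  set I := ∫ x in Set.Icc (0:ℝ) δ, f x with hIdef
  set S := ∫ x in Set.Icc (0:ℝ) δ, f x ^ 2 with hSdef
  set M := ∫ x in Set.Icc (0:ℝ) δ, x * f x with hMdef
  -- nonnegativity
  have hI0 : 0 ≤ I := setIntegral_nonneg measurableSet_Icc fun x hx => hpos x hx
  have hS0 : 0 ≤ S := setIntegral_nonneg measurableSet_Icc fun x _ => sq_nonneg _
  have hM0 : 0 ≤ M := setIntegral_nonneg measurableSet_Icc fun x hx =>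
    mul_nonneg hx.1 (hpos x hx)
  -- integrability of x * f x
  have hxf : IntegrableOn (fun x => x * f x) (Set.Icc (0:ℝ) δ) volume := by
    refine Integrable.mono' (hint.abs.const_mul δ) ?_ ?_
    · exact (measurable_id.aestronglyMeasurable).mul hint.aestronglyMeasurable
    · refine (ae_restrict_iff' measurableSet_Icc).2 (Filter.Eventually.of_forall fun x hx => ?_)
      rw [Real.norm_eq_abs, abs_mul]
      exact mul_le_mul_of_nonneg_right (by rw [abs_of_nonneg hx.1]; exact hx.2)
        (abs_nonneg _)
  -- Cauchy-Schwarz on the whole interval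
  have hCSfull : I ^ 2 ≤ δ * S := by
    have := cs_aux (by linarith : (0:ℝ) < δ) hint hint2
    simpa using this
  rcases eq_or_lt_of_le hI0 with hI | hI
  · rw [← hI]; nlinarith [mul_nonneg hS0 hM0]
  -- I > 0, hence S > 0
  have hS : 0 < S := by nlinarith
  set t := I ^ 2 / (4 * S) with htdef
  have ht0 : 0 < t := by positivity
  have htδ : t ≤ δ := by
    rw [htdef, div_le_iff₀ (by positivity)]
    nlinarith
  -- split the integral
  have hunion : Set.Icc (0:ℝ) δ = Set.Icc 0 t ∪ Set.Ioc t δ :=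
    (Set.Icc_union_Ioc_eq_Icc ht0.le htδ).symm
  have hsub1 : Set.Icc (0:ℝ) t ⊆ Set.Icc 0 δ := by rw [hunion]; exact Set.subset_union_left
  have hsub2 : Set.Ioc t δ ⊆ Set.Icc (0:ℝ) δ := by rw [hunion]; exact Set.subset_union_right
  set A := ∫ x in Set.Icc (0:ℝ) t, f x with hAdef
  set B := ∫ x in Set.Ioc t δ, f x with hBdef
  have hsplit : I = A + B := by
    rw [hIdef, hunion]
    exact setIntegral_union (((Set.Iic_disjoint_Ioc le_rfl).mono Set.Icc_subset_Iic_self le_rfl)) measurableSet_Ioc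
      (hint.mono_set hsub1) (hint.mono_set hsub2)
  -- Cauchy-Schwarz on [0, t]
  have hA2 : A ^ 2 ≤ t * S := by
    have h1 := cs_aux ht0 (hint.mono_set hsub1) (hint2.mono_set hsub1)
    have h2 : (∫ x in Set.Icc (0:ℝ) t, f x ^ 2) ≤ S := by
      refine setIntegral_mono_set hint2 ?_ (Filter.Eventually.of_forall hsub1)
      exact (ae_restrict_iff' measurableSet_Icc).2
        (Filter.Eventually.of_forall fun x _ => sq_nonneg _)
    nlinarith
  have hA : A ≤ I / 2 := by
    have hA0 : 0 ≤ A := setIntegral_nonneg measurableSet_Icc fun x hx => hpos x (hsub1 hx)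
    have htS : t * S = I ^ 2 / 4 := by
      rw [htdef]; field_simp
    nlinarith [hA2, htS, hI, hA0]
  -- Chebyshev on (t, δ]
  have hB : t * B ≤ M := by
    have h1 : t * B = ∫ x in Set.Ioc t δ, t * f x := by
      rw [hBdef, MeasureTheory.integral_const_mul]
    have h2 : (∫ x in Set.Ioc t δ, t * f x) ≤ ∫ x in Set.Ioc t δ, x * f x := by
      refine setIntegral_mono_on ((hint.mono_set hsub2).const_mul _)
        (hxf.mono_set hsub2) measurableSet_Ioc fun x hx => ?_
      exact mul_le_mul_of_nonneg_right hx.1.le (hpos x (hsub2 hx))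
    have h3 : (∫ x in Set.Ioc t δ, x * f x) ≤ M := by
      refine setIntegral_mono_set hxf ?_ (Filter.Eventually.of_forall hsub2)
      exact (ae_restrict_iff' measurableSet_Icc).2
        (Filter.Eventually.of_forall fun x hx => mul_nonneg hx.1 (hpos x hx))
    linarith
  -- conclude
  have hBge : I / 2 ≤ B := by linarith
  have hfin : I ^ 3 ≤ 8 * S * M := by
    have : t * (I / 2) ≤ M := le_trans (mul_le_mul_of_nonneg_left hBge ht0.le) hB
    rw [htdef] at this
    rw [div_mul_eq_mul_div, div_le_iff₀ (by positivity)] at this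
    nlinarith
  nlinarith
end

section
/- The function φ(x) = exp(1/(x²-1) + 1) for |x| < 1 (extended by 0 for |x| ≥ 1) satisfies 1 - 4x² ≤ φ(x) ≤ 1 - x²/2 for all x with |x| ≤ 1/2. -/
/-- The cut-off profile `φ(x) = exp(1/(x²-1)+1)` for `|x| < 1`, extended by `0`. -/
noncomputable def phiProfile (x : ℝ) : ℝ :=
  if |x| < 1 then Real.exp (1 / (x ^ 2 - 1) + 1) else 0

/-- `1 - 4x² ≤ φ(x) ≤ 1 - x²/2` for all `|x| ≤ 1/2`. -/
theorem stmt_2 :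
    ∀ x : ℝ, |x| ≤ 1 / 2 →
      1 - 4 * x ^ 2 ≤ phiProfile x ∧ phiProfile x ≤ 1 - x ^ 2 / 2 := by
  intro x hx
  have hx2 : x ^ 2 ≤ 1 / 4 := by
    have := sq_abs x
    nlinarith [abs_nonneg x]
  have hx1 : |x| < 1 := lt_of_le_of_lt hx (by norm_num)
  have hden : (0 : ℝ) < 1 - x ^ 2 := by nlinarith
  have h0 : x ^ 2 - 1 ≠ 0 := by nlinarith
  have heq : 1 / (x ^ 2 - 1) + 1 = -(x ^ 2 / (1 - x ^ 2)) := by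
    field_simp
    ring
  have hphi : phiProfile x = Real.exp (-(x ^ 2 / (1 - x ^ 2))) := by
    rw [phiProfile, if_pos hx1, heq]
  set u : ℝ := x ^ 2 / (1 - x ^ 2) with hu
  have hu0 : 0 ≤ u := div_nonneg (sq_nonneg x) hden.le
  constructor
  · have hle := Real.add_one_le_exp (-u)
    have : u ≤ 4 * x ^ 2 := by
      rw [hu, div_le_iff₀ hden]
      nlinarith
    rw [hphi]
    linarith
  · have hle := Real.add_one_le_exp u
    have h1 : Real.exp (-u) ≤ 1 / (u + 1) := by
      rw [Real.exp_neg, inv_le_iff_one_le_mul₀' (Real.exp_pos u), ← div_le_iff₀ (by positivity)]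
      simpa using hle
    have h2 : 1 / (u + 1) ≤ 1 - x ^ 2 / 2 := by
      have huu : u + 1 = 1 / (1 - x ^ 2) := by
        rw [hu]; field_simp; ring
      rw [huu, one_div_one_div]
      nlinarith
    rw [hphi]
    linarith
end
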